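/- Let k ≥ 1 and let s be a spin vector of length k. Then the Hamiltonian H_01(s) = (1/2)·(k + Σ_{i=0}^{k−1} s_i)·((k−2) + Σ_{i=0}^{k−1} s_i) (a rational number) satisfies H_01(s) ≥ 0, and H_01(s) = 0 if and only if s is a spin zero-one-hot vector, i.e., at most one index i has s_i = +1; equivalently, Σ_i s_i equals −k or −(k−2). -/
import Mathlib


/-- The Ising Hamiltonian `H₀₁(s) = ½(k + Σ sᵢ)((k-2) + Σ sᵢ)` for a spin vector `s` of
length `k` is nonnegative, and is zero iff `s` is a spin zero-one-hot vector
(at most one entry equals +1). -/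
theorem spin_zero_one_hot_hamiltonian (k : ℕ) (hk : 1 ≤ k) (s : ℕ → ℤ)
    (hs : ∀ i < k, s i = -1 ∨ s i = 1) :
    0 ≤ (1 / 2 : ℚ) * ((k : ℚ) + ∑ i ∈ Finset.range k, (s i : ℚ)) *
        ((k : ℚ) - 2 + ∑ i ∈ Finset.range k, (s i : ℚ)) ∧
    ((1 / 2 : ℚ) * ((k : ℚ) + ∑ i ∈ Finset.range k, (s i : ℚ)) *
        ((k : ℚ) - 2 + ∑ i ∈ Finset.range k, (s i : ℚ)) = 0 ↔
      ∀ i < k, ∀ j < k, s i = 1 → s j = 1 → i = j) := by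
  classical
  set P := (Finset.range k).filter (fun i => s i = 1) with hP
  have hsum : ∑ i ∈ Finset.range k, s i = 2 * P.card - k := by
    have h1 : ∑ i ∈ Finset.range k, (s i + 1) = 2 * P.card := by
      rw [← Finset.sum_filter_add_sum_filter_not (Finset.range k) (fun i => s i = 1)]
      have hA : ∑ i ∈ P, (s i + 1) = 2 * P.card := by
        rw [Finset.sum_congr rfl (fun i hi => by
          simp only [hP, Finset.mem_filter] at hi
          rw [hi.2])]
        simp [mul_comm]
      have hB : ∑ i ∈ (Finset.range k).filter (fun i => ¬ s i = 1), (s i + 1) = 0 := by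
        apply Finset.sum_eq_zero
        intro i hi
        simp only [Finset.mem_filter, Finset.mem_range] at hi
        rcases hs i hi.1 with h | h
        · rw [h]; ring
        · exact absurd h hi.2
      rw [hA, hB, add_zero]
    have := Finset.sum_add_distrib (s := Finset.range k) (f := s) (g := fun _ => (1:ℤ))
    simp only [Finset.sum_const, Finset.card_range, nsmul_eq_mul, mul_one] at this
    rw [this] at h1
    omega
  have hsq : (∑ i ∈ Finset.range k, (s i : ℚ)) = 2 * (P.card : ℚ) - k := by
    have : ((∑ i ∈ Finset.range k, s i : ℤ) : ℚ) = ((2 * P.card - k : ℤ) : ℚ) := by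
      exact_mod_cast congrArg (fun z : ℤ => (z : ℚ)) hsum
    push_cast at this
    exact this
  have hH : (1 / 2 : ℚ) * ((k : ℚ) + ∑ i ∈ Finset.range k, (s i : ℚ)) *
      ((k : ℚ) - 2 + ∑ i ∈ Finset.range k, (s i : ℚ))
      = 2 * (P.card : ℚ) * ((P.card : ℚ) - 1) := by
    rw [hsq]; ring
  have hcard : (∀ i < k, ∀ j < k, s i = 1 → s j = 1 → i = j) ↔ P.card ≤ 1 := by
    rw [Finset.card_le_one]
    constructor
    · intro h a ha b hb
      simp only [hP, Finset.mem_filter, Finset.mem_range] at ha hb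
      exact h a ha.1 b hb.1 ha.2 hb.2
    · intro h i hi j hj hsi hsj
      exact h i (by simp [hP, Finset.mem_filter, hi, hsi]) j
        (by simp [hP, Finset.mem_filter, hj, hsj])
  constructor
  · rw [hH]
    rcases Nat.eq_zero_or_pos P.card with h | h
    · simp [h]
    · have : (1 : ℚ) ≤ P.card := by exact_mod_cast h
      nlinarith
  · rw [hH, hcard]
    constructor
    · intro h
      by_contra hc
      push_neg at hc
      have : (2 : ℚ) ≤ P.card := by exact_mod_cast hc
      nlinarith
    · intro h
      interval_cases hc : P.card <;> simp_all
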